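/- For the matrices Ã = (1/√2)·[[1, -i],[1, i]] and a vector a = (e^{iα/2}, e^{-iα/2})ᵀ, and R = (1/(2y))·[[1,-x],[-x,x²+y²]] with y > 0, one has (Ã*a)* R (Ã*a) = |e^{iα} - γ|² / (1 - |γ|²), where γ = (x + iy - i)/(x + iy + i). -/

import Mathlib

open Complex Matrix

/-- For `Ã = (1/√2)·[[1,-i],[1,i]]`, `a = (e^{iα/2}, e^{-iα/2})ᵀ` and
`R = (1/(2y))·[[1,-x],[-x,x²+y²]]`, one has
`(Ã*a)* R (Ã*a) = |e^{iα} - γ|²/(1-|γ|²)` where `γ = (x+iy-i)/(x+iy+i)`. -/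
theorem cayley_quadratic_form (x y α : ℝ) (hy : 0 < y) :
    let Atil : Matrix (Fin 2) (Fin 2) ℂ :=
      ((1 / Real.sqrt 2 : ℝ) : ℂ) • !![1, -I; 1, I]
    let a : Fin 2 → ℂ := ![Complex.exp (α / 2 * I), Complex.exp (-(α / 2) * I)]
    let R : Matrix (Fin 2) (Fin 2) ℂ :=
      ((1 / (2 * y) : ℝ) : ℂ) • !![1, -(x : ℂ); -(x : ℂ), (x : ℂ) ^ 2 + (y : ℂ) ^ 2]
    let γ : ℂ := (x + y * I - I) / (x + y * I + I)
    let v : Fin 2 → ℂ := Atilᴴ *ᵥ a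
    star v ⬝ᵥ (R *ᵥ v) =
      ((‖Complex.exp (α * I) - γ‖ ^ 2 /
        (1 - ‖γ‖ ^ 2) : ℝ) : ℂ) := by
  intro Atil a R γ v
  set c := Real.cos (α/2) with hc
  set s := Real.sin (α/2) with hs
  have hcs : c^2 + s^2 = 1 := by rw [hc, hs]; exact Real.cos_sq_add_sin_sq _
  have h2 : ((Real.sqrt 2 : ℝ) : ℂ)^2 = 2 := by
    rw [sq, ← Complex.ofReal_mul, Real.mul_self_sqrt (by norm_num : (0:ℝ) ≤ 2)]
    norm_num
  have hsq : ((Real.sqrt 2 : ℝ) : ℂ) ≠ 0 := by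
    intro h; rw [h] at h2; norm_num at h2
  have hy' : (y:ℂ) ≠ 0 := by exact_mod_cast hy.ne'
  have hexp1 : Complex.exp (↑α / 2 * I) = (c : ℂ) + (s : ℂ) * I := by
    rw [show ((α:ℂ)/2) = ((α/2 : ℝ) : ℂ) by push_cast; ring, Complex.exp_mul_I]
    push_cast [hc, hs]; norm_num
  have hexp2 : Complex.exp (-(↑α / 2) * I) = (c : ℂ) - (s : ℂ) * I := by
    rw [show (-((α:ℂ)/2)) = ((-(α/2) : ℝ) : ℂ) by push_cast; ring, Complex.exp_mul_I]
    push_cast [hc, hs]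
    simp [Complex.cos_neg, Complex.sin_neg]
    ring
  have hv : v = ![((Real.sqrt 2 * c : ℝ):ℂ), ((-(Real.sqrt 2 * s) : ℝ):ℂ)] := by
    funext i
    fin_cases i <;>
      simp only [v, Atil, a, Matrix.mulVec, dotProduct, Fin.sum_univ_two,
        Matrix.conjTranspose_apply, Matrix.smul_apply, smul_eq_mul, star_mul',
        Matrix.cons_val', Matrix.cons_val_zero, Matrix.cons_val_one, Matrix.head_cons,
        Matrix.empty_val', Matrix.cons_val_fin_one, Matrix.of_apply,
        star_def, map_div₀, Complex.conj_I, Complex.conj_ofReal, _root_.map_one, star_one,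
        hexp1, hexp2, Fin.isValue, Matrix.cons_val_fin_one, Matrix.head_fin_const, map_neg] <;>
      push_cast <;>
      field_simp <;>
      ring_nf <;>
      simp only [Complex.I_sq, h2, map_neg, _root_.map_one, Complex.conj_I] <;>
      ring_nf <;> simp only [Complex.I_sq] <;> ring
  have hLHS : star v ⬝ᵥ (R *ᵥ v) =
      (((c^2 + 2*x*c*s + (x^2+y^2)*s^2)/y : ℝ) : ℂ) := by
    rw [hv]
    simp only [R, Matrix.mulVec, dotProduct, Fin.sum_univ_two,
      Matrix.smul_apply, Pi.star_apply, smul_eq_mul,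
      Matrix.cons_val', Matrix.cons_val_zero, Matrix.cons_val_one, Matrix.head_cons,
      Matrix.empty_val', Matrix.cons_val_fin_one, Matrix.of_apply,
      star_def, Complex.conj_ofReal]
    push_cast
    field_simp
    ring_nf
    rw [h2]
    ring
  rw [hLHS]
  norm_cast
  -- RHS computation
  set C := Real.cos α with hCdef
  set S := Real.sin α with hSdef
  have hC : C = c^2 - s^2 := by
    rw [hCdef, hc, hs, show α = 2*(α/2) by ring, Real.cos_two_mul']
    ring_nf
  have hS : S = 2*s*c := by
    rw [hSdef, hc, hs, show α = 2*(α/2) by ring, Real.sin_two_mul]; ring_nf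
  have hexpα : Complex.exp (↑α * I) = (C : ℂ) + (S : ℂ) * I := by
    rw [show ((α:ℂ)) = ((α : ℝ) : ℂ) by norm_cast, Complex.exp_mul_I]
    push_cast [hCdef, hSdef]; norm_num
  have hD : (0:ℝ) < x^2 + (y+1)^2 := by positivity
  have hd : ((x:ℂ) + y * I + I) ≠ 0 := by
    intro h
    have := congrArg Complex.im h
    simp at this
    linarith
  have habsγ : ‖γ‖ ^ 2 = (x^2 + (y-1)^2) / (x^2 + (y+1)^2) := by
    rw [Complex.sq_norm]
    simp only [γ]
    rw [Complex.normSq_div]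
    congr 1 <;> simp [Complex.normSq_apply] <;> ring
  have hnum : ‖Complex.exp (↑α * I) - γ‖ ^ 2 =
      ((C*x - S*y - S - x)^2 + (C*y + C + S*x - y + 1)^2) / (x^2 + (y+1)^2) := by
    have : Complex.exp (↑α * I) - γ =
        (Complex.exp (↑α * I) * ((x:ℂ) + y * I + I) - ((x:ℂ) + y * I - I)) /
          ((x:ℂ) + y * I + I) := by
      simp only [γ]; rw [sub_div' hd]
    rw [this, Complex.sq_norm, Complex.normSq_div]
    congr 1
    · rw [hexpα]
      simp [Complex.normSq_apply]
      ring
    · simp [Complex.normSq_apply]; ring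
  have h4y : (0:ℝ) < 4*y := by linarith
  have hden : 1 - (x^2+(y-1)^2)/(x^2+(y+1)^2) = (4*y)/(x^2+(y+1)^2) := by
    field_simp; ring
  rw [hnum, habsγ, hden, hC, hS, div_div_div_cancel_right₀]
  case hc => exact hD.ne'
  rw [div_eq_div_iff hy.ne' h4y.ne']
  linear_combination (y - 2*y^2 + y^3 + x^2*y - s^2*y - 2*s^2*y^2 - s^2*y^3 - s^2*x^2*y
    - c^2*y - 2*c^2*y^2 - c^2*y^3 - c^2*x^2*y) * hcs
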